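/- Let p₁, ..., pₙ and ṽ₀ be unit vectors in ℝ^{n+1} such that p₁,...,pₙ are pairwise orthogonal, and apply Gram–Schmidt to (ṽ₀, p₁, ..., pₙ) obtaining orthonormal vectors ṽ₀, ṽ₁, ..., ṽₙ (assuming linear independence). If p₀ is a unit vector orthogonal to p₁,...,pₙ, then for each k = 1,...,n, |ṽ_k − p_k|² ≤ 2 ∑_{i=0}^{k-1} |ṽ_i − p_i|², and consequently |ṽ_k − p_k| ≤ 2^{n−1/2} |ṽ₀ − p₀|. -/

import Mathlib

open scoped RealInnerProductSpace

/-- Let `p 0, ..., p n` be an orthonormal family in `ℝ^{n+1}` and let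
`w 0` be a unit vector.  Apply Gram–Schmidt to `(w 0, p 1, ..., p n)`, obtaining the
orthonormal vectors `w 0, w 1, ..., w n` (via `w k = v k / ‖v k‖` with
`v k = p k − ∑_{i<k} ⟪p k, w i⟫ w i`).  Then for each `k ≠ 0`,
`‖w k − p k‖² ≤ 2 ∑_{i<k} ‖w i − p i‖²` and `‖w k − p k‖ ≤ 2^{n−1/2} ‖w 0 − p 0‖`. -/
theorem gram_schmidt_stability (n : ℕ)
    (p v w : Fin (n + 1) → EuclideanSpace ℝ (Fin (n + 1)))
    (hp : Orthonormal ℝ p) (hw : Orthonormal ℝ w)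
    (hv : ∀ k : Fin (n + 1), k ≠ 0 →
      v k = p k - ∑ i ∈ Finset.Iio k, ⟪p k, w i⟫ • w i)
    (hvne : ∀ k : Fin (n + 1), k ≠ 0 → v k ≠ 0)
    (hwk : ∀ k : Fin (n + 1), k ≠ 0 → w k = ‖v k‖⁻¹ • v k) :
    ∀ k : Fin (n + 1), k ≠ 0 →
      ‖w k - p k‖ ^ 2 ≤ 2 * ∑ i ∈ Finset.Iio k, ‖w i - p i‖ ^ 2 ∧
      ‖w k - p k‖ ≤ (2 : ℝ) ^ ((n : ℝ) - 1 / 2) * ‖w 0 - p 0‖ := by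
  have hp1 : ∀ i, ‖p i‖ = 1 := hp.1
  have hw1 : ∀ i, ‖w i‖ = 1 := hw.1
  have key : ∀ k : Fin (n+1), k ≠ 0 →
      ‖w k - p k‖^2 ≤ 2 * ∑ i ∈ Finset.Iio k, ‖w i - p i‖^2 := by
    intro k hk
    have hSum : ∑ i ∈ Finset.Iio k, (⟪p k, w i⟫)^2
        ≤ ∑ i ∈ Finset.Iio k, ‖w i - p i‖^2 := by
      refine Finset.sum_le_sum fun i hi => ?_
      have hik : k ≠ i := (Finset.mem_Iio.mp hi).ne'
      have h0 : ⟪p k, p i⟫ = 0 := hp.2 hik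
      have heq : ⟪p k, w i⟫ = ⟪p k, w i - p i⟫ := by
        rw [inner_sub_right, h0, sub_zero]
      rw [heq]
      have habs : |⟪p k, w i - p i⟫| ≤ ‖w i - p i‖ := by
        simpa [hp1 k] using abs_real_inner_le_norm (p k) (w i - p i)
      calc ⟪p k, w i - p i⟫^2 = |⟪p k, w i - p i⟫|^2 := (sq_abs _).symm
        _ ≤ ‖w i - p i‖^2 := by
            exact pow_le_pow_left₀ (abs_nonneg _) habs 2
    have hvk := hv k hk
    have hps : ⟪p k, ∑ i ∈ Finset.Iio k, ⟪p k, w i⟫ • w i⟫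
        = ∑ i ∈ Finset.Iio k, ⟪p k, w i⟫^2 := by
      rw [inner_sum]
      refine Finset.sum_congr rfl fun i _ => ?_
      rw [real_inner_smul_right]; ring
    have hss : ‖(∑ i ∈ Finset.Iio k, ⟪p k, w i⟫ • w i)‖^2
        = ∑ i ∈ Finset.Iio k, ⟪p k, w i⟫^2 := by
      rw [← real_inner_self_eq_norm_sq]
      simpa [sq] using hw.inner_sum (fun i => ⟪p k, w i⟫) (fun i => ⟪p k, w i⟫) (Finset.Iio k)
    have hv2 : ‖v k‖^2 = 1 - ∑ i ∈ Finset.Iio k, ⟪p k, w i⟫^2 := by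
      rw [hvk, @norm_sub_sq_real, hps, hss, hp1]; ring
    have hpv : ⟪p k, v k⟫ = ‖v k‖^2 := by
      rw [hv2, hvk, inner_sub_right, hps, real_inner_self_eq_norm_sq, hp1]; ring
    have hn0 : ‖v k‖ ≠ 0 := norm_ne_zero_iff.mpr (hvne k hk)
    have hpwk : ⟪p k, w k⟫ = ‖v k‖ := by
      rw [hwk k hk, real_inner_smul_right, hpv, sq]
      field_simp
    have hnorm_eq : ‖w k - p k‖^2 = 2 - 2*‖v k‖ := by
      rw [@norm_sub_sq_real, hw1, hp1, real_inner_comm, hpwk]; ring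
    have hsum_nn : (0:ℝ) ≤ ∑ i ∈ Finset.Iio k, ⟪p k, w i⟫^2 :=
      Finset.sum_nonneg fun i _ => sq_nonneg _
    have hle1 : ‖v k‖ ≤ 1 := by nlinarith [norm_nonneg (v k)]
    have h1 : ‖w k - p k‖^2 ≤ 2 * ∑ i ∈ Finset.Iio k, ⟪p k, w i⟫^2 := by
      rw [hnorm_eq]
      nlinarith [norm_nonneg (v k)]
    linarith
  -- Part 2: induction
  intro k hk
  refine ⟨key k hk, ?_⟩
  have hkv : 1 ≤ k.val := Nat.one_le_iff_ne_zero.mpr (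
    fun h => hk (Fin.ext (by rw [h]; rfl)))
  have hkn : k.val ≤ n := by omega
  have hn1 : 1 ≤ n := le_trans hkv hkn
  set e : Fin (n+1) → ℝ := fun i => ‖w i - p i‖^2 with he
  set E : ℕ → ℝ := fun m => if h : m < n+1 then e ⟨m, h⟩ else 0 with hE
  have hconv : ∀ k : Fin (n+1), ∑ i ∈ Finset.Iio k, e i = ∑ m ∈ Finset.range k.val, E m := by
    intro k
    refine Finset.sum_bij' (fun (i : Fin (n+1)) (_ : i ∈ Finset.Iio k) => (i:ℕ))
      (fun m hm => (⟨m, lt_trans (Finset.mem_range.mp hm) k.isLt⟩ : Fin (n+1)))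
      ?_ ?_ ?_ ?_ ?_
    · intro i hi; have h := Finset.mem_Iio.mp hi; exact Finset.mem_range.mpr h
    · intro m hm; have h := Finset.mem_range.mp hm; exact Finset.mem_Iio.mpr h
    · intro i hi; simp
    · intro m hm; simp
    · intro i hi; simp [hE, i.isLt, Fin.is_le]
  have hEkey : ∀ m : ℕ, 1 ≤ m → m ≤ n → E m ≤ 2 * ∑ j ∈ Finset.range m, E j := by
    intro m h1m hmn
    have hlt : m < n + 1 := by omega
    set k' : Fin (n+1) := ⟨m, hlt⟩ with hk'
    have hk'0 : k' ≠ 0 := by simp only [hk', ne_eq, Fin.ext_iff, Fin.val_zero]; omega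

    have := key k' hk'0
    rw [show (∑ i ∈ Finset.Iio k', ‖w i - p i‖^2) = ∑ i ∈ Finset.Iio k', e i from rfl,
      hconv k'] at this
    simpa [hE, hlt, hmn, hk'] using this
  have hE0 : E 0 = ‖w 0 - p 0‖^2 := by simp [hE, he]
  have hE0nn : 0 ≤ E 0 := by rw [hE0]; positivity
  have hF : ∀ m : ℕ, 1 ≤ m → m ≤ n + 1 →
      ∑ j ∈ Finset.range m, E j ≤ 3^(m-1) * E 0 := by
    intro m hm
    induction m, hm using Nat.le_induction with
    | base => intro _; simp
    | succ m h1m ih =>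
      intro hmn
      have ihm := ih (by omega)
      rw [Finset.sum_range_succ]
      have h2 : E m ≤ 2 * ∑ j ∈ Finset.range m, E j := hEkey m h1m (by omega)
      have : (∑ j ∈ Finset.range m, E j) + E m ≤ 3 * ∑ j ∈ Finset.range m, E j := by linarith
      have h3 : (3:ℝ) * ∑ j ∈ Finset.range m, E j ≤ 3 * (3^(m-1) * E 0) := by linarith
      have hpow : (3:ℝ) * 3^(m-1) = 3^(m+1-1) := by
        rw [show m+1-1 = m-1+1 by omega, pow_succ]; ring
      calc (∑ j ∈ Finset.range m, E j) + E m ≤ 3 * (3^(m-1) * E 0) := by linarith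
        _ = 3^(m+1-1) * E 0 := by rw [← hpow]; ring
  -- combine
  have hek : e k ≤ 2 * 3^(k.val - 1) * E 0 := by
    have h1 := hEkey k.val hkv hkn
    have h2 := hF k.val hkv (by omega)
    have h3 : E k.val = e k := by simp [hE, k.isLt, Fin.is_le]
    rw [h3] at h1
    linarith
  have hgeom : (2:ℝ) * 3^(k.val-1) ≤ 2^(2*n-1) := by
    have h1 : (3:ℝ)^(k.val-1) ≤ 3^(n-1) :=
      pow_le_pow_right₀ (by norm_num) (by omega)
    have h2 : (3:ℝ)^(n-1) ≤ 4^(n-1) :=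
      pow_le_pow_left₀ (by norm_num) (by norm_num) _
    have h3 : (2:ℝ) * 4^(n-1) = 2^(2*n-1) := by
      rw [show (4:ℝ) = 2^2 by norm_num, ← pow_mul,
        show 2*n-1 = 2*(n-1)+1 by omega, pow_succ]; ring
    nlinarith
  have hsq : ‖w k - p k‖^2 ≤ 2^(2*n-1) * ‖w 0 - p 0‖^2 := by
    rw [hE0] at hek
    have : e k = ‖w k - p k‖^2 := rfl
    nlinarith [sq_nonneg (‖w 0 - p 0‖)]
  set B : ℝ := (2:ℝ) ^ ((n:ℝ) - 1/2) with hB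
  have hBnn : 0 ≤ B := Real.rpow_nonneg (by norm_num) _
  have hB2 : B^2 = (2:ℝ)^(2*n-1) := by
    rw [hB, sq, ← Real.rpow_add (by norm_num : (0:ℝ) < 2)]
    rw [show (n:ℝ) - 1/2 + ((n:ℝ) - 1/2) = ((2*n-1 : ℕ) : ℝ) by
      push_cast [Nat.cast_sub (by omega : 1 ≤ 2*n)]; ring]
    exact Real.rpow_natCast 2 _
  have hfin : ‖w k - p k‖^2 ≤ (B * ‖w 0 - p 0‖)^2 := by
    rw [mul_pow, hB2]; exact hsq
  have := Real.sqrt_le_sqrt hfin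
  rwa [Real.sqrt_sq (norm_nonneg _), Real.sqrt_sq (by positivity)] at this
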